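/- If M ⊆ Mono, K has wide pullbacks of families of M-morphisms, and K is M-wellpowered, then every object of K has an M-minimization, obtained as the wide pullback of all M-subobjects. -/

import Mathlib

open CategoryTheory CategoryTheory.Limits

universe v u

/-- An (E,M)-factorization system on a category. -/
structure FactorizationSystem (K : Type u) [Category.{v} K] : Type (max u (v+1)) where
  E : MorphismProperty K
  M : MorphismProperty K
  E_comp_iso : ∀ {X Y Z : K} (e : X ⟶ Y) (i : Y ⟶ Z), IsIso i → E e → E (e ≫ i)
  iso_comp_E : ∀ {X Y Z : K} (i : X ⟶ Y) (e : Y ⟶ Z), IsIso i → E e → E (i ≫ e)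
  M_comp_iso : ∀ {X Y Z : K} (m : X ⟶ Y) (i : Y ⟶ Z), IsIso i → M m → M (m ≫ i)
  iso_comp_M : ∀ {X Y Z : K} (i : X ⟶ Y) (m : Y ⟶ Z), IsIso i → M m → M (i ≫ m)
  factor : ∀ {X Y : K} (f : X ⟶ Y),
      ∃ (I : K) (e : X ⟶ I) (m : I ⟶ Y), E e ∧ M m ∧ e ≫ m = f
  diagonal : ∀ {A B X Y : K} (e : A ⟶ B) (f : A ⟶ X) (g : B ⟶ Y) (m : X ⟶ Y),
      E e → M m → e ≫ g = f ≫ m → ∃! d : B ⟶ X, e ≫ d = f ∧ d ≫ m = g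

/-- An object is M-minimal if every M-morphism into it is an isomorphism. -/
def MMinimal {K : Type u} [Category.{v} K] (fs : FactorizationSystem K) (C : K) : Prop :=
  ∀ {D : K} (h : D ⟶ C), fs.M h → IsIso h


/-- If M ⊆ Mono, K has wide pullbacks of M-morphisms, and K is M-wellpowered, then
every object has an M-minimization. -/
theorem minimization_exists {K : Type u} [Category.{v} K] (fs : FactorizationSystem K)
    (hM : ∀ {X Y : K} (m : X ⟶ Y), fs.M m → Mono m)
    (hwide : ∀ {I : Type v} {B : K} (A : I → K) (f : ∀ i, A i ⟶ B),
      (∀ i, fs.M (f i)) → HasLimit (WidePullbackShape.wideCospan B A f))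
    (hwp : ∀ C : K, ∃ (ι : Type v) (S : ι → K) (s : ∀ i, S i ⟶ C),
      (∀ i, fs.M (s i)) ∧ ∀ {T : K} (t : T ⟶ C), fs.M t →
        ∃ (i : ι) (φ : T ≅ S i), φ.hom ≫ s i = t)
    (C : K) :
    ∃ (M₀ : K) (m : M₀ ⟶ C), fs.M m ∧ MMinimal fs M₀ := by
  obtain ⟨ι, S, s, hs, hsub⟩ := hwp C
  haveI := hwide S s hs
  set F := WidePullbackShape.wideCospan C S s with hF
  set P := limit F with hP
  set p : P ⟶ C := limit.π F none with hp
  have hπ : ∀ i, limit.π F (Option.some i) ≫ s i = p := fun i =>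
    limit.w F (WidePullbackShape.Hom.term i)
  obtain ⟨I0, e, m, he, hm, hem⟩ := fs.factor p
  refine ⟨I0, m, hm, ?_⟩
  intro D h hh
  -- h ≫ m is in M (M is closed under composition)
  have hcomp : fs.M (h ≫ m) := by
    obtain ⟨J, e2, m2, he2, hm2, hfac⟩ := fs.factor (h ≫ m)
    -- lift e2 against m then against h
    have sq1 : e2 ≫ m2 = (𝟙 D ≫ h) ≫ m := by rw [hfac]; simp
    obtain ⟨d1, ⟨hd1a, hd1b⟩, -⟩ := fs.diagonal e2 (𝟙 D ≫ h) m2 m he2 hm sq1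
    obtain ⟨d2, ⟨hd2a, hd2b⟩, -⟩ := fs.diagonal e2 (𝟙 D) d1 h he2 hh hd1a
    -- e2 is an iso: use uniqueness of diagonal in the square (e2, m2)
    have sq2 : e2 ≫ m2 = e2 ≫ m2 := rfl
    obtain ⟨d3, -, hu⟩ := fs.diagonal e2 e2 m2 m2 he2 hm2 sq2
    have h1 : d2 ≫ e2 = d3 := by
      apply hu
      constructor
      · rw [← Category.assoc, hd2a, Category.id_comp]
      · rw [Category.assoc, hfac, ← Category.assoc, hd2b, hd1b]
    have h2 : 𝟙 J = d3 := by
      apply hu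
      constructor
      · simp
      · simp
    have hiso : IsIso e2 := by
      refine ⟨d2, ?_, by rw [h1, ← h2]⟩
      have heq : (e2 ≫ d2) ≫ e2 = 𝟙 D ≫ e2 := by
        rw [Category.assoc, h1, ← h2]; simp
      haveI := hM h hh
      haveI := hM m hm
      haveI : Mono (e2 ≫ m2) := by rw [hfac]; exact mono_comp h m
      haveI hmono : Mono e2 := mono_of_mono e2 m2
      exact hmono.right_cancellation _ _ heq
    rw [← hfac]
    exact fs.iso_comp_M e2 m2 hiso hm2
  obtain ⟨i, φ, hφ⟩ := hsub (h ≫ m) hcomp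
  set u : P ⟶ D := limit.π F (Option.some i) ≫ φ.inv with hu
  have sq : e ≫ m = u ≫ (h ≫ m) := by
    rw [hem, hu, ← hφ]
    exact (hπ i).symm.trans ((congrArg (fun x => limit.π F (Option.some i) ≫ x)
      (Iso.inv_hom_id_assoc φ (s i))).symm.trans (Category.assoc _ _ _).symm)
  obtain ⟨d, ⟨hda, hdb⟩, -⟩ := fs.diagonal e u m (h ≫ m) he hcomp sq
  haveI hmm : Mono m := hM m hm
  haveI hmh : Mono h := hM h hh
  have hdh : d ≫ h = 𝟙 I0 := by
    rw [← cancel_mono m]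
    rw [Category.assoc, hdb]; simp
  have hhd : h ≫ d = 𝟙 D := by
    rw [← cancel_mono h]
    rw [Category.assoc, hdh]; simp
  exact ⟨d, hhd, hdh⟩
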